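/- arXiv:1011.5034 — 3 statements merged into one kernel-verified Lean document; each statement's English description precedes it below -/
import Mathlib

section
/- Let K ≥ 0 and L ≥ 0 be integers, let α_0 > α_1 > ... > α_K be real numbers, and let a_{k,l} ∈ ℂ for 0 ≤ k ≤ K, 0 ≤ l ≤ L. Suppose there is l_0 with 0 ≤ l_0 ≤ L such that a_{0,l_0} ≠ 0 and a_{0,l} = 0 for all l > l_0. Define f : (1,∞) → ℂ by f(x) = Σ_{k=0}^K Σ_{l=0}^L a_{k,l} · x^{α_k} · (ln x)^l. Then there exist M ≥ 0 and x_0 > 1 such that for all x ≥ x_0 one has f(x) ≠ 0 and |f'(x)/f(x) − α_0/x − l_0/(x·ln x)| ≤ M / (x·(ln x)^2). -/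
open Finset

open Filter Real Topology

lemma auxPLR (m : ℕ) {r : ℝ} (hr : 0 < r) :
    Tendsto (fun x : ℝ => Real.log x ^ m / x ^ r) atTop (𝓝 0) := by
  refine ((isLittleO_log_rpow_rpow_atTop (m : ℝ) hr).tendsto_div_nhds_zero).congr' ?_
  filter_upwards [eventually_ge_atTop (1:ℝ)] with x hx
  rw [Real.rpow_natCast]

lemma auxE3 : ∀ x : ℝ, (3:ℝ) ≤ x → 1 ≤ Real.log x := by
  intro x hx
  have hx0 : (0:ℝ) < x := by linarith
  rw [Real.le_log_iff_exp_le hx0]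
  exact (Real.exp_one_lt_d9.le.trans (by norm_num)).trans hx

lemma auxReal (A β : ℝ) (n m : ℕ) (h : β < A ∨ (β = A ∧ m < n)) :
    Tendsto (fun x : ℝ => x ^ β * Real.log x ^ m / (x ^ A * Real.log x ^ n)) atTop (𝓝 0) := by
  rcases h with h | ⟨rfl, hmn⟩
  · refine squeeze_zero' ?_ ?_ (auxPLR m (by linarith : 0 < A - β))
    · filter_upwards [eventually_ge_atTop (3:ℝ)] with x hx
      have hx0 : (0:ℝ) < x := by linarith
      have hl := auxE3 x hx
      positivity
    · filter_upwards [eventually_ge_atTop (3:ℝ)] with x hx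
      have hx0 : (0:ℝ) < x := by linarith
      have hl := auxE3 x hx
      have hlp : (0:ℝ) < Real.log x := by linarith
      have hβ : (0:ℝ) < x ^ β := Real.rpow_pos_of_pos hx0 β
      have h1 : (0:ℝ) < x ^ (A-β) := Real.rpow_pos_of_pos hx0 _
      have hln : (1:ℝ) ≤ Real.log x ^ n := one_le_pow₀ hl
      have hA : x ^ A = x ^ β * x ^ (A - β) := by
        rw [← Real.rpow_add hx0]; ring_nf
      have heq : x ^ β * Real.log x ^ m / (x ^ A * Real.log x ^ n)
          = Real.log x ^ m / (x ^ (A-β) * Real.log x ^ n) := by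
        rw [hA]; field_simp
      rw [heq]
      calc Real.log x ^ m / (x ^ (A-β) * Real.log x ^ n)
          ≤ Real.log x ^ m / (x ^ (A-β) * 1) := by
            gcongr
        _ = Real.log x ^ m / x ^ (A-β) := by rw [mul_one]
  · have hinv : Tendsto (fun x : ℝ => (Real.log x)⁻¹) atTop (𝓝 0) :=
      Real.tendsto_log_atTop.inv_tendsto_atTop
    refine squeeze_zero' ?_ ?_ hinv
    · filter_upwards [eventually_ge_atTop (3:ℝ)] with x hx
      have hx0 : (0:ℝ) < x := by linarith
      have hl := auxE3 x hx
      positivity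
    · filter_upwards [eventually_ge_atTop (3:ℝ)] with x hx
      have hx0 : (0:ℝ) < x := by linarith
      have hl := auxE3 x hx
      have hA : (0:ℝ) < x ^ β := Real.rpow_pos_of_pos hx0 _
      have hlp : (0:ℝ) < Real.log x := by linarith
      rw [mul_div_mul_left _ _ (ne_of_gt hA), inv_eq_one_div,
        div_le_div_iff₀ (by positivity) hlp]
      calc Real.log x ^ m * Real.log x = Real.log x ^ (m+1) := by ring
      _ ≤ Real.log x ^ n := pow_le_pow_right₀ hl hmn
      _ = 1 * Real.log x ^ n := by ring

lemma auxC (A β : ℝ) (n m : ℕ) (c : ℂ) (h : β < A ∨ (β = A ∧ m < n)) :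
    Tendsto (fun x : ℝ => c * ((x ^ β : ℝ) : ℂ) * ((Real.log x : ℂ)) ^ m /
      (((x ^ A : ℝ) : ℂ) * ((Real.log x : ℂ)) ^ n)) atTop (𝓝 0) := by
  rw [tendsto_zero_iff_norm_tendsto_zero]
  have h0 : Tendsto (fun x : ℝ => ‖c‖ * (x ^ β * Real.log x ^ m / (x ^ A * Real.log x ^ n)))
      atTop (𝓝 0) := by
    simpa using (auxReal A β n m h).const_mul ‖c‖
  refine squeeze_zero' (Eventually.of_forall fun _ => norm_nonneg _) ?_ h0
  filter_upwards [eventually_ge_atTop (3:ℝ)] with x hx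
  have hx0 : (0:ℝ) < x := by linarith
  have hl : (0:ℝ) < Real.log x := by linarith [auxE3 x hx]
  have hβ := Real.rpow_pos_of_pos hx0 β
  have hA := Real.rpow_pos_of_pos hx0 A
  simp only [norm_div, norm_mul, norm_pow, Complex.norm_real, Real.norm_eq_abs,
    abs_of_pos hβ, abs_of_pos hA, abs_of_pos hl]
  exact le_of_eq (by ring)

set_option maxHeartbeats 2000000 in
/-- General case: for `f(x) = Σ_{k=0}^K Σ_{l=0}^L a_{k,l} x^{α_k} (ln x)^l` with
`α_0 > α_1 > ⋯ > α_K`, and `l₀ ≤ L` the largest index with `a_{0,l₀} ≠ 0` among the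
leading terms, there are `M ≥ 0` and `x₀ > 1` such that for all `x ≥ x₀` one has
`f(x) ≠ 0` and `|f'(x)/f(x) − α_0/x − l₀/(x ln x)| ≤ M/(x (ln x)²)`. -/
theorem logDeriv_sum_rpow_log_asymptotic
    (K L : ℕ) (α : ℕ → ℝ) (hα : ∀ k, k < K → α (k + 1) < α k)
    (a : ℕ → ℕ → ℂ) (l₀ : ℕ) (hl₀ : l₀ ≤ L) (ha : a 0 l₀ ≠ 0)
    (ha' : ∀ l, l₀ < l → l ≤ L → a 0 l = 0)
    (f : ℝ → ℂ)
    (hf : ∀ x : ℝ, 1 < x →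
      f x = ∑ k ∈ Finset.range (K + 1), ∑ l ∈ Finset.range (L + 1),
        a k l * ((x ^ α k : ℝ) : ℂ) * ((Real.log x : ℂ)) ^ l) :
    ∃ M : ℝ, 0 ≤ M ∧ ∃ x₀ : ℝ, 1 < x₀ ∧ ∀ x : ℝ, x₀ ≤ x →
      f x ≠ 0 ∧
      ‖deriv f x / f x - (α 0 : ℂ) / (x : ℂ) -
          (l₀ : ℂ) / ((x : ℂ) * (Real.log x : ℂ))‖ ≤
        M / (x * (Real.log x) ^ 2) := by
  have hlt : ∀ k : ℕ, 1 ≤ k → k ≤ K → α k < α 0 := by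
    intro k hk1 hkK
    induction k with
    | zero => omega
    | succ n ih =>
      have h1 : α (n+1) < α n := hα n (by omega)
      rcases Nat.eq_zero_or_pos n with rfl | hn
      · exact h1
      · exact h1.trans (ih hn (by omega))
  set P : ℝ → ℂ := fun x => ((x ^ α 0 : ℝ) : ℂ) * ((Real.log x : ℂ)) ^ l₀ with hP
  have hPne : ∀ x : ℝ, 3 ≤ x → P x ≠ 0 := by
    intro x hx
    have hx0 : (0:ℝ) < x := by linarith
    have hl : (0:ℝ) < Real.log x := by linarith [auxE3 x hx]
    have h1 : ((x ^ α 0 : ℝ) : ℂ) ≠ 0 := by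
      exact_mod_cast (Real.rpow_pos_of_pos hx0 (α 0)).ne'
    have h2 : ((Real.log x : ℂ)) ≠ 0 := by exact_mod_cast hl.ne'
    exact mul_ne_zero h1 (pow_ne_zero _ h2)
  set g : ℝ → ℂ := fun x => f x / P x with hg
  set q : ℝ → ℂ := fun x => ∑ k ∈ Finset.range (K+1), ∑ l ∈ Finset.range (L+1),
      (a k l * ((α k : ℂ) - (α 0 : ℂ)) * ((x ^ α k : ℝ) : ℂ) * ((Real.log x : ℂ)) ^ (l+2)
        + a k l * ((l : ℂ) - (l₀ : ℂ)) * ((x ^ α k : ℝ) : ℂ) * ((Real.log x : ℂ)) ^ (l+1)) / P x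
    with hq
  -- limit of g
  have hgT : Tendsto g atTop (𝓝 (a 0 l₀)) := by
    have hgs : g =ᶠ[atTop] fun x => ∑ k ∈ Finset.range (K+1), ∑ l ∈ Finset.range (L+1),
        a k l * ((x ^ α k : ℝ) : ℂ) * ((Real.log x : ℂ)) ^ l / P x := by
      filter_upwards [eventually_ge_atTop (3:ℝ)] with x hx
      rw [hg]
      simp only [hf x (by linarith : (1:ℝ) < x), Finset.sum_div]
    have hterm : ∀ k ∈ Finset.range (K+1), ∀ l ∈ Finset.range (L+1),
        Tendsto (fun x : ℝ => a k l * ((x ^ α k : ℝ) : ℂ) * ((Real.log x : ℂ)) ^ l / P x) atTop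
          (𝓝 (if k = 0 ∧ l = l₀ then a 0 l₀ else 0)) := by
      intro k hk l hl
      rw [Finset.mem_range] at hk hl
      rcases Nat.eq_zero_or_pos k with rfl | hkpos
      · rcases lt_trichotomy l l₀ with h | rfl | h
        · rw [if_neg (by omega)]
          exact auxC (α 0) (α 0) l₀ l _ (Or.inr ⟨rfl, h⟩)
        · rw [if_pos ⟨rfl, rfl⟩]
          refine Tendsto.congr' ?_ tendsto_const_nhds
          filter_upwards [eventually_ge_atTop (3:ℝ)] with x hx
          have hx0 : (0:ℝ) < x := by linarith
          have hlg : (0:ℝ) < Real.log x := by linarith [auxE3 x hx]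
          have h1 : ((x ^ α 0 : ℝ) : ℂ) ≠ 0 := by
            exact_mod_cast (Real.rpow_pos_of_pos hx0 (α 0)).ne'
          have h2 : ((Real.log x : ℂ)) ≠ 0 := by exact_mod_cast hlg.ne'
          rw [hP]
          field_simp
        · rw [if_neg (by omega), ha' l h (by omega)]
          simp
      · rw [if_neg (by omega)]
        exact auxC (α 0) (α k) l₀ l _ (Or.inl (hlt k hkpos (by omega)))
    have hT := tendsto_finset_sum (Finset.range (K+1)) (fun k hk =>
      tendsto_finset_sum (Finset.range (L+1)) (fun l hl => hterm k hk l hl))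
    have hval : (∑ k ∈ Finset.range (K+1), ∑ l ∈ Finset.range (L+1),
        if k = 0 ∧ l = l₀ then a 0 l₀ else 0) = a 0 l₀ := by
      rw [Finset.sum_eq_single 0]
      · rw [Finset.sum_eq_single l₀]
        · simp
        · intro b _ hb; simp [hb]
        · intro h; exact absurd (Finset.mem_range.2 (by omega)) h
      · intro b _ hb
        apply Finset.sum_eq_zero
        intro l _
        simp [hb]
      · intro h; exact absurd (Finset.mem_range.2 (by omega)) h
    rw [hval] at hT
    exact hT.congr' hgs.symm
  -- limit of q
  obtain ⟨cq, hqT⟩ : ∃ cq : ℂ, Tendsto q atTop (𝓝 cq) := by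
    have hterm : ∀ k l : ℕ, ∃ d : ℂ, k ≤ K → l ≤ L →
        Tendsto (fun x : ℝ =>
          (a k l * ((α k : ℂ) - (α 0 : ℂ)) * ((x ^ α k : ℝ) : ℂ) * ((Real.log x : ℂ)) ^ (l+2)
            + a k l * ((l : ℂ) - (l₀ : ℂ)) * ((x ^ α k : ℝ) : ℂ) * ((Real.log x : ℂ)) ^ (l+1))
            / P x) atTop (𝓝 d) := by
      intro k l
      rcases Nat.eq_zero_or_pos k with rfl | hkpos
      · have t1 : Tendsto (fun x : ℝ => a 0 l * ((α 0 : ℂ) - (α 0 : ℂ)) * ((x ^ α 0 : ℝ):ℂ)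
            * ((Real.log x : ℂ)) ^ (l+2) / (((x ^ α 0 : ℝ):ℂ) * ((Real.log x : ℂ)) ^ l₀))
            atTop (𝓝 0) := by
          simp only [sub_self, mul_zero, zero_mul, zero_div]
          exact tendsto_const_nhds
        rcases lt_trichotomy l l₀ with h | rfl | h
        · rcases Nat.lt_or_ge (l+1) l₀ with h1 | h1
          · refine ⟨0, fun _ _ => ?_⟩
            have t2 := auxC (α 0) (α 0) l₀ (l+1) (a 0 l * ((l:ℂ) - (l₀:ℂ))) (Or.inr ⟨rfl, h1⟩)
            have ht := t1.add t2
            rw [add_zero] at ht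
            simp only [hP]
            exact ht.congr fun x => (add_div _ _ _).symm
          · have h2 : l + 1 = l₀ := by omega
            refine ⟨a 0 l * ((l:ℂ) - (l₀:ℂ)), fun _ _ => ?_⟩
            have t2 : Tendsto (fun x : ℝ => a 0 l * ((l:ℂ) - (l₀:ℂ)) * ((x ^ α 0 : ℝ):ℂ)
                * ((Real.log x : ℂ)) ^ (l+1) / (((x ^ α 0 : ℝ):ℂ) * ((Real.log x : ℂ)) ^ l₀))
                atTop (𝓝 (a 0 l * ((l:ℂ) - (l₀:ℂ)))) := by
              refine Tendsto.congr' ?_ tendsto_const_nhds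
              filter_upwards [eventually_ge_atTop (3:ℝ)] with x hx
              have hx0 : (0:ℝ) < x := by linarith
              have hlg : (0:ℝ) < Real.log x := by linarith [auxE3 x hx]
              have hc1 : ((x ^ α 0 : ℝ) : ℂ) ≠ 0 := by
                exact_mod_cast (Real.rpow_pos_of_pos hx0 (α 0)).ne'
              have hc2 : ((Real.log x : ℂ)) ≠ 0 := by exact_mod_cast hlg.ne'
              rw [← h2]
              field_simp
            have ht := t1.add t2
            rw [zero_add] at ht
            simp only [hP]
            exact ht.congr fun x => (add_div _ _ _).symm
        · refine ⟨0, fun _ _ => ?_⟩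
          simp only [sub_self, mul_zero, zero_mul, add_zero, zero_add, zero_div]
          exact tendsto_const_nhds
        · refine ⟨0, fun _ hlL => ?_⟩
          rw [ha' l h hlL]
          simp only [zero_mul, mul_zero, add_zero, zero_add, zero_div]
          exact tendsto_const_nhds
      · refine ⟨0, fun hk _ => ?_⟩
        have hklt : α k < α 0 := hlt k hkpos hk
        have t1 := auxC (α 0) (α k) l₀ (l+2) (a k l * ((α k : ℂ) - (α 0:ℂ))) (Or.inl hklt)
        have t2 := auxC (α 0) (α k) l₀ (l+1) (a k l * ((l:ℂ) - (l₀:ℂ))) (Or.inl hklt)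
        have ht := t1.add t2
        rw [add_zero] at ht
        simp only [hP]
        exact ht.congr fun x => (add_div _ _ _).symm
    choose d hd using hterm
    refine ⟨∑ k ∈ Finset.range (K+1), ∑ l ∈ Finset.range (L+1), d k l, ?_⟩
    rw [hq]
    refine tendsto_finset_sum _ fun k hk => tendsto_finset_sum _ fun l hl => ?_
    rw [Finset.mem_range] at hk hl
    exact hd k l (by omega) (by omega)
  -- derivative formula
  have hfd : ∀ x : ℝ, 1 < x → HasDerivAt f
      (∑ k ∈ Finset.range (K+1), ∑ l ∈ Finset.range (L+1),
        a k l * ((α k * x ^ (α k - 1) * Real.log x ^ l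
          + x ^ α k * ((l : ℝ) * Real.log x ^ (l-1) * x⁻¹) : ℝ) : ℂ)) x := by
    intro x hx
    have hx0 : (0:ℝ) < x := by linarith
    have H : HasDerivAt (fun y : ℝ => ∑ k ∈ Finset.range (K+1), ∑ l ∈ Finset.range (L+1),
        a k l * ((y ^ α k * Real.log y ^ l : ℝ) : ℂ))
        (∑ k ∈ Finset.range (K+1), ∑ l ∈ Finset.range (L+1),
          a k l * ((α k * x ^ (α k - 1) * Real.log x ^ l
            + x ^ α k * ((l:ℝ) * Real.log x ^ (l-1) * x⁻¹) : ℝ) : ℂ)) x := by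
      refine HasDerivAt.fun_sum fun k _ => HasDerivAt.fun_sum fun l _ => ?_
      have h1 : HasDerivAt (fun y : ℝ => y ^ α k * Real.log y ^ l)
          (α k * x ^ (α k - 1) * Real.log x ^ l
            + x ^ α k * ((l:ℝ) * Real.log x ^ (l-1) * x⁻¹)) x :=
        (Real.hasDerivAt_rpow_const (Or.inl hx0.ne')).mul ((Real.hasDerivAt_log hx0.ne').pow l)
      exact h1.ofReal_comp.const_mul (a k l)
    refine H.congr_of_eventuallyEq ?_
    filter_upwards [eventually_gt_nhds hx] with y hy
    rw [hf y hy]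
    simp only [Complex.ofReal_mul, Complex.ofReal_pow, mul_assoc]
  -- key algebraic identity
  have hkey : ∀ x : ℝ, 3 ≤ x → f x ≠ 0 →
      deriv f x / f x - (α 0 : ℂ) / (x : ℂ) - (l₀ : ℂ) / ((x : ℂ) * (Real.log x : ℂ))
        = q x / (g x * (x : ℂ) * ((Real.log x : ℂ)) ^ 2) := by
    intro x hx hfne
    have hx0 : (0:ℝ) < x := by linarith
    have hlg : (0:ℝ) < Real.log x := by linarith [auxE3 x hx]
    have hX : ((x:ℝ):ℂ) ≠ 0 := by exact_mod_cast hx0.ne'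
    have hLx : ((Real.log x : ℝ):ℂ) ≠ 0 := by exact_mod_cast hlg.ne'
    have hPx : P x ≠ 0 := hPne x hx
    have hD := (hfd x (by linarith)).deriv
    have hFx := hf x (by linarith)
    have hstar : (x:ℂ) * ((Real.log x:ℂ))^2 * deriv f x
        = (∑ k ∈ Finset.range (K+1), ∑ l ∈ Finset.range (L+1),
            (a k l * ((α k : ℂ) - (α 0:ℂ)) * ((x ^ α k:ℝ):ℂ) * ((Real.log x:ℂ))^(l+2)
              + a k l * ((l:ℂ) - (l₀:ℂ)) * ((x ^ α k:ℝ):ℂ) * ((Real.log x:ℂ))^(l+1)))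
          + ((α 0 : ℂ) * ((Real.log x:ℂ))^2 + (l₀:ℂ) * (Real.log x:ℂ)) * f x := by
      rw [hD, hFx]
      simp only [Finset.mul_sum]
      rw [← Finset.sum_add_distrib]
      refine Finset.sum_congr rfl fun k _ => ?_
      rw [← Finset.sum_add_distrib]
      refine Finset.sum_congr rfl fun l _ => ?_
      have hrp : (x ^ (α k - 1) : ℝ) = x ^ α k / x := Real.rpow_sub_one hx0.ne' (α k)
      rcases Nat.eq_zero_or_pos l with rfl | hl
      · push_cast [hrp]
        field_simp
        ring
      · obtain ⟨m, rfl⟩ := Nat.exists_eq_succ_of_ne_zero hl.ne'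
        have hm : m + 1 - 1 = m := rfl
        push_cast [hrp, hm]
        field_simp
        simp only [Nat.succ_eq_add_one]
        ring
    have hqx : q x = (∑ k ∈ Finset.range (K+1), ∑ l ∈ Finset.range (L+1),
        (a k l * ((α k:ℂ) - (α 0:ℂ)) * ((x ^ α k:ℝ):ℂ) * ((Real.log x:ℂ))^(l+2)
          + a k l * ((l:ℂ) - (l₀:ℂ)) * ((x ^ α k:ℝ):ℂ) * ((Real.log x:ℂ))^(l+1))) / P x := by
      rw [hq]
      simp only [Finset.sum_div]
    have hgx : g x = f x / P x := by rw [hg]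
    have hS : (∑ k ∈ Finset.range (K+1), ∑ l ∈ Finset.range (L+1),
        (a k l * ((α k:ℂ) - (α 0:ℂ)) * ((x ^ α k:ℝ):ℂ) * ((Real.log x:ℂ))^(l+2)
          + a k l * ((l:ℂ) - (l₀:ℂ)) * ((x ^ α k:ℝ):ℂ) * ((Real.log x:ℂ))^(l+1)))
        = (x:ℂ) * ((Real.log x:ℂ))^2 * deriv f x
          - ((α 0 : ℂ) * ((Real.log x:ℂ))^2 + (l₀:ℂ) * (Real.log x:ℂ)) * f x := by
      rw [hstar]; ring
    rw [hqx, hgx, hS]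
    field_simp
    ring
  -- final assembly
  have hgnorm : ∀ᶠ x in atTop, ‖a 0 l₀‖ / 2 ≤ ‖g x‖ := by
    refine hgT.norm.eventually (eventually_ge_nhds ?_)
    have : 0 < ‖a 0 l₀‖ := norm_pos_iff.2 ha
    linarith
  have hqnorm : ∀ᶠ x in atTop, ‖q x‖ ≤ ‖cq‖ + 1 :=
    hqT.norm.eventually (eventually_le_nhds (lt_add_one _))
  obtain ⟨x₀', hx₀'⟩ := (((hgnorm.and hqnorm).and (eventually_ge_atTop (3:ℝ))).and
    (eventually_ge_atTop (1:ℝ))).exists_forall_of_atTop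
  refine ⟨2 * (‖cq‖ + 1) / ‖a 0 l₀‖, by positivity, max x₀' 3, by
    have : (1:ℝ) < 3 := by norm_num
    exact lt_of_lt_of_le this (le_max_right _ _), ?_⟩
  intro x hx
  obtain ⟨⟨⟨hgx, hqx⟩, hx3⟩, -⟩ := hx₀' x (le_trans (le_max_left _ _) hx)
  have hx3' : (3:ℝ) ≤ x := hx3
  have hx0 : (0:ℝ) < x := by linarith
  have hll : (1:ℝ) ≤ Real.log x := auxE3 x hx3'
  have hl0 : (0:ℝ) < Real.log x := by linarith
  have hfne : f x ≠ 0 := by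
    intro h0
    have : g x = 0 := by rw [hg]; simp [h0]
    rw [this] at hgx
    simp only [norm_zero] at hgx
    have : 0 < ‖a 0 l₀‖ := norm_pos_iff.2 ha
    linarith
  refine ⟨hfne, ?_⟩
  rw [hkey x hx3' hfne]
  have hgpos : (0:ℝ) < ‖g x‖ := by
    have : 0 < ‖a 0 l₀‖ := norm_pos_iff.2 ha
    linarith
  have habs : ‖q x / (g x * ↑x * (↑(Real.log x) : ℂ) ^ 2)‖
      = ‖q x‖ / (‖g x‖ * x * Real.log x ^ 2) := by
    rw [norm_div, norm_mul, norm_mul, norm_pow]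
    simp only [Complex.norm_real, Real.norm_eq_abs, abs_of_pos hx0, abs_of_pos hl0]
  rw [habs]
  have h1 : ‖q x‖ / (‖g x‖ * x * Real.log x ^ 2)
      ≤ (‖cq‖ + 1) / (‖a 0 l₀‖ / 2 * x * Real.log x ^ 2) := by
    have hapos : 0 < ‖a 0 l₀‖ := norm_pos_iff.2 ha
    gcongr
  refine h1.trans (le_of_eq ?_)
  have hane : ‖a 0 l₀‖ ≠ 0 := (norm_pos_iff.2 ha).ne'
  field_simp
end

section
/- Let C > 0, 0 ≤ r < 1, K ≥ 0, let λ̃ ∈ ℂ with |λ̃| ≤ r·C, and let g : (−∞,−C] → ℂ be measurable with |g(λ)| ≤ K/|λ| for all λ ≤ −C. For s ∈ ℂ with Re(s) > −1 define F(s) := ∫_{−∞}^{−C} |λ|^{−s} · g(λ) · ((1 − λ̃/λ)^{−s} − 1) dλ, where |λ|^{−s} = exp(−s·ln|λ|) and (1 − λ̃/λ)^{−s} is the principal branch of the complex power (well defined since |λ̃/λ| ≤ r < 1). Then the integrand is absolutely integrable for every s with Re(s) > −1, F is holomorphic on the half-plane {s ∈ ℂ : Re(s) > −1}, and F(0) =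 0. -/
open MeasureTheory Complex Set Metric

lemma aux_exp_sub_one (z : ℂ) : ‖Complex.exp z - 1‖ ≤ ‖z‖ * Real.exp ‖z‖ := by
  have h : ∀ w ∈ closedBall (0:ℂ) ‖z‖, ‖Complex.exp w‖ ≤ Real.exp ‖z‖ := by
    intro w hw
    rw [Complex.norm_exp]
    apply Real.exp_le_exp.2
    calc w.re ≤ |w.re| := le_abs_self _
    _ ≤ ‖w‖ := Complex.abs_re_le_norm w
    _ ≤ ‖z‖ := by simpa using hw
  have hz0 : (0:ℂ) ∈ closedBall (0:ℂ) ‖z‖ := mem_closedBall_self (norm_nonneg z)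
  have hzz : z ∈ closedBall (0:ℂ) ‖z‖ := by simp [mem_closedBall, dist_eq_norm]
  have := (convex_closedBall (0:ℂ) ‖z‖).norm_image_sub_le_of_norm_hasDerivWithin_le
    (fun w _ => (Complex.hasDerivAt_exp w).hasDerivWithinAt) h hz0 hzz
  simpa [Complex.exp_zero, mul_comm] using this

lemma aux_integrable {C p : ℝ} (hC : 0 < C) (hp : p < -1) :
    IntegrableOn (fun l : ℝ => |l| ^ p) (Set.Iic (-C)) := by
  have h : IntegrableOn (fun t : ℝ => t ^ p) (Ioi C) := integrableOn_Ioi_rpow_of_lt hp hC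
  have h2 : Integrable (Set.indicator (Ioi C) (fun t : ℝ => t ^ p)) := by
    rwa [integrable_indicator_iff measurableSet_Ioi]
  have h3 := h2.comp_neg
  have h4 : Integrable (Set.indicator (Iio (-C)) (fun l : ℝ => |l| ^ p)) := by
    apply h3.congr
    filter_upwards with x
    by_cases hx : x < -C
    · rw [Set.indicator_of_mem (by simp; linarith : -x ∈ Ioi C),
        Set.indicator_of_mem (by simpa using hx)]
      rw [abs_of_neg (by linarith)]
    · rw [Set.indicator_of_notMem (by simp; push_neg at hx; linarith),
        Set.indicator_of_notMem (by simpa using hx)]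
  have h5 : IntegrableOn (fun l : ℝ => |l| ^ p) (Iio (-C)) :=
    (integrable_indicator_iff measurableSet_Iio).mp h4
  have heq : Set.Iio (-C) =ᵐ[(volume : Measure ℝ)] Set.Iic (-C) := Iio_ae_eq_Iic
  rwa [IntegrableOn, ← Measure.restrict_congr_set heq]

lemma aux_log_one_sub {w : ℂ} {r : ℝ} (hw : ‖w‖ ≤ r) (hr : r < 1) :
    ‖Complex.log (1 - w)‖ ≤ ‖w‖ * (1 + (1 - r)⁻¹) := by
  have h0 : ‖-w‖ < 1 := by rw [norm_neg]; linarith [norm_nonneg w]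
  have h := Complex.norm_log_one_add_le h0
  rw [norm_neg] at h
  rw [show (1 : ℂ) + -w = 1 - w by ring] at h
  have hinv : (1 - ‖w‖)⁻¹ ≤ (1 - r)⁻¹ := by
    apply inv_anti₀ (by linarith) (by linarith)
  have hir : (0:ℝ) ≤ (1 - r)⁻¹ := by
    have : (0:ℝ) < 1 - r := by linarith
    positivity
  have hsq : ‖w‖ ^ 2 ≤ ‖w‖ := by nlinarith [norm_nonneg w, hw.trans hr.le]
  have h2 : ‖w‖ ^ 2 * (1 - ‖w‖)⁻¹ / 2 ≤ ‖w‖ * (1 - r)⁻¹ := by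
    calc ‖w‖ ^ 2 * (1 - ‖w‖)⁻¹ / 2 ≤ ‖w‖ * (1 - r)⁻¹ / 2 := by
          have : (0:ℝ) ≤ (1 - ‖w‖)⁻¹ := by
            have : (0:ℝ) < 1 - ‖w‖ := by have := hw.trans hr.le; linarith [lt_of_le_of_lt hw hr]
            positivity
          gcongr
    _ ≤ ‖w‖ * (1 - r)⁻¹ := by
        have : 0 ≤ ‖w‖ * (1 - r)⁻¹ := by positivity
        linarith
  calc ‖Complex.log (1 - w)‖ ≤ ‖w‖ ^ 2 * (1 - ‖w‖)⁻¹ / 2 + ‖w‖ := h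
  _ ≤ ‖w‖ * (1 - r)⁻¹ + ‖w‖ := by linarith
  _ = ‖w‖ * (1 + (1 - r)⁻¹) := by ring

lemma aux_norm_exp_real (s : ℂ) (L : ℝ) :
    ‖Complex.exp (-s * (L : ℂ))‖ = Real.exp (-s.re * L) := by
  rw [Complex.norm_exp]
  congr 1
  simp [Complex.mul_re]

lemma aux_norm_exp_le (z : ℂ) : ‖Complex.exp z‖ ≤ Real.exp ‖z‖ := by
  rw [Complex.norm_exp]
  exact Real.exp_le_exp.2 ((le_abs_self _).trans (Complex.abs_re_le_norm z))

lemma aux_factor (s M : ℂ) {mB : ℝ} (h : ‖s‖ * ‖M‖ ≤ mB) :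
    ‖Complex.exp (-s * M) - 1‖ ≤ ‖s‖ * ‖M‖ * Real.exp mB := by
  have h1 := aux_exp_sub_one (-s * M)
  have hn : ‖-s * M‖ = ‖s‖ * ‖M‖ := by rw [norm_mul, norm_neg]
  rw [hn] at h1
  exact h1.trans (by gcongr ?_ * ?_; exact Real.exp_le_exp.2 h)

lemma aux_rpow_split {x : ℝ} (hx : 0 < x) (t : ℝ) : x ^ (t - 2) = x ^ t * x⁻¹ * x⁻¹ := by
  rw [show t - 2 = t + -1 + -1 by ring, Real.rpow_add hx, Real.rpow_add hx,
    Real.rpow_neg_one]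

lemma aux_rpow_bound {x a S t : ℝ} (hx : 0 < x) (hta : -t ≤ a) (htS : t ≤ S) :
    x ^ (-t) ≤ x ^ a + x ^ (-S) := by
  rw [Real.rpow_def_of_pos hx, Real.rpow_def_of_pos hx, Real.rpow_def_of_pos hx]
  rcases le_or_gt 0 (Real.log x) with hL | hL
  · have h1 : Real.log x * -t ≤ Real.log x * a := by nlinarith
    nlinarith [Real.exp_le_exp.2 h1, Real.exp_pos (Real.log x * -S)]
  · have h1 : Real.log x * -t ≤ Real.log x * -S := by nlinarith
    nlinarith [Real.exp_le_exp.2 h1, Real.exp_pos (Real.log x * a)]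

lemma aux_abs_log_le {x η : ℝ} (hx : 0 < x) (hη : 0 < η) :
    |Real.log x| ≤ (x ^ η + x ^ (-η)) / η := by
  have A : Real.log x ≤ x ^ η / η := Real.log_le_rpow_div hx.le hη
  have B : -Real.log x ≤ x ^ (-η) / η := by
    have h1 : Real.log x⁻¹ ≤ x⁻¹ ^ η / η := Real.log_le_rpow_div (by positivity) hη
    rwa [Real.log_inv, Real.inv_rpow hx.le, ← Real.rpow_neg hx.le] at h1
  have hp : (0:ℝ) ≤ x ^ η := by positivity
  have hm : (0:ℝ) ≤ x ^ (-η) := by positivity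
  rw [abs_le]
  refine ⟨by rw [neg_le]; calc -Real.log x ≤ x ^ (-η) / η := B
    _ ≤ (x ^ η + x ^ (-η)) / η := by gcongr; linarith, ?_⟩
  calc Real.log x ≤ x ^ η / η := A
  _ ≤ (x ^ η + x ^ (-η)) / η := by gcongr; linarith

lemma aux_hasDerivAt_expmul (c s : ℂ) :
    HasDerivAt (fun s : ℂ => Complex.exp (-s * c)) (-c * Complex.exp (-s * c)) s := by
  have h := ((hasDerivAt_id s).neg.mul_const c).cexp
  convert h using 1
  · rfl
  · rfl
  simp only [Pi.neg_apply, id]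
  ring

set_option maxHeartbeats 2000000 in
/-- The remainder term `R_C(s, λ̃)`: for `C > 0`, `0 ≤ r < 1`, `|λ̃| ≤ rC` and a measurable
`g : (−∞,−C] → ℂ` with `|g(λ)| ≤ K/|λ|`, the function
`F(s) = ∫_{−∞}^{−C} |λ|^{−s} g(λ) ((1 − λ̃/λ)^{−s} − 1) dλ` has absolutely integrable
integrand for `Re s > −1`, is holomorphic on `{Re s > −1}`, and vanishes at `s = 0`. -/
theorem remainder_RC_holomorphic
    (C r K : ℝ) (hC : 0 < C) (hr0 : 0 ≤ r) (hr1 : r < 1) (hK : 0 ≤ K)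
    (lam : ℂ) (hlam : ‖lam‖ ≤ r * C)
    (g : ℝ → ℂ) (hg : Measurable g)
    (hbound : ∀ l : ℝ, l ≤ -C → ‖g l‖ ≤ K / |l|) :
    (∀ s : ℂ, -1 < s.re →
      MeasureTheory.IntegrableOn
        (fun l : ℝ =>
          Complex.exp (-s * (Real.log |l| : ℂ)) * g l * ((1 - lam / (l : ℂ)) ^ (-s) - 1))
        (Set.Iic (-C))) ∧
    DifferentiableOn ℂ
      (fun s : ℂ =>
        ∫ l in Set.Iic (-C),
          Complex.exp (-s * (Real.log |l| : ℂ)) * g l * ((1 - lam / (l : ℂ)) ^ (-s) - 1))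
      {s : ℂ | -1 < s.re} ∧
    (∫ l in Set.Iic (-C),
        Complex.exp (-(0 : ℂ) * (Real.log |l| : ℂ)) * g l *
          ((1 - lam / (l : ℂ)) ^ (-(0 : ℂ)) - 1)) = 0 := by
  have hir : (0:ℝ) < (1 - r)⁻¹ := by
    have : (0:ℝ) < 1 - r := by linarith
    positivity
  set c0 : ℝ := r * C * (1 + (1 - r)⁻¹) with hc0def
  have hc0 : 0 ≤ c0 := by positivity
  set M : ℝ → ℂ := fun l => Complex.log (1 - lam / (l : ℂ)) with hMdef
  set G : ℂ → ℝ → ℂ := fun s l =>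
    Complex.exp (-s * (Real.log |l| : ℂ)) * g l * (Complex.exp (-s * M l) - 1) with hGdef
  -- pointwise facts on the domain
  have hfacts : ∀ l : ℝ, l ≤ -C →
      0 < |l| ∧ C ≤ |l| ∧ ‖M l‖ ≤ c0 / |l| ∧ (1 : ℂ) - lam / (l : ℂ) ≠ 0 := by
    intro l hl
    have hl0 : l < 0 := lt_of_le_of_lt hl (by linarith)
    have hxC : C ≤ |l| := by rw [abs_of_neg hl0]; linarith
    have hx0 : 0 < |l| := lt_of_lt_of_le hC hxC
    have hnl : ‖(l : ℂ)‖ = |l| := by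
      rw [Complex.norm_real, Real.norm_eq_abs]
    have hw : ‖lam / (l : ℂ)‖ ≤ r * C / |l| := by
      rw [norm_div, hnl]
      gcongr
    have hwr : ‖lam / (l : ℂ)‖ ≤ r := by
      refine hw.trans ?_
      rw [div_le_iff₀ hx0]
      gcongr
    have hz : (1 : ℂ) - lam / (l : ℂ) ≠ 0 := by
      intro h
      rw [sub_eq_zero] at h
      rw [← h, norm_one] at hwr
      linarith
    have hM : ‖M l‖ ≤ c0 / |l| := by
      have h1 := aux_log_one_sub hwr hr1
      have h2 : ‖lam / (l : ℂ)‖ * (1 + (1 - r)⁻¹) ≤ r * C / |l| * (1 + (1 - r)⁻¹) := by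
        gcongr
      refine h1.trans (h2.trans ?_)
      rw [hc0def, div_mul_eq_mul_div]
    exact ⟨hx0, hxC, hM, hz⟩
  -- G agrees with the original integrand on the domain
  have hFG : ∀ s : ℂ, Set.EqOn
      (fun l : ℝ =>
        Complex.exp (-s * (Real.log |l| : ℂ)) * g l * ((1 - lam / (l : ℂ)) ^ (-s) - 1))
      (G s) (Set.Iic (-C)) := by
    intro s l hl
    obtain ⟨_, _, _, hz⟩ := hfacts l hl
    simp only [hGdef, hMdef]
    rw [Complex.cpow_def_of_ne_zero hz, mul_comm (Complex.log _) (-s)]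
  -- measurability
  have m1 : ∀ s : ℂ, Measurable fun l : ℝ => Complex.exp (-s * (Real.log |l| : ℂ)) :=
    fun s => Complex.measurable_exp.comp (measurable_const.mul
      (Complex.measurable_ofReal.comp (Real.measurable_log.comp measurable_abs)))
  have m2 : Measurable M := by
    rw [hMdef]
    exact Complex.measurable_log.comp (measurable_const.sub
      (measurable_const.div Complex.measurable_ofReal))
  have m3 : ∀ s : ℂ, Measurable fun l : ℝ => Complex.exp (-s * M l) :=
    fun s => Complex.measurable_exp.comp (measurable_const.mul m2)
  have hmG : ∀ s : ℂ, Measurable (G s) := by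
    intro s
    exact ((m1 s).mul hg).mul ((m3 s).sub measurable_const)
  -- key pointwise bound for G
  have hGbound : ∀ s : ℂ, ∀ l : ℝ, l ≤ -C →
      ‖G s l‖ ≤ K * c0 * ‖s‖ * Real.exp (‖s‖ * (c0 / C)) * |l| ^ (-s.re - 2) := by
    intro s l hl
    obtain ⟨hx0, hxC, hM, hz⟩ := hfacts l hl
    have hgl : ‖g l‖ ≤ K / |l| := by exact hbound l hl
    have hMC : ‖M l‖ ≤ c0 / C := hM.trans (by gcongr)
    have hmB : ‖s‖ * ‖M l‖ ≤ ‖s‖ * (c0 / C) := by gcongr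
    have h1 : ‖Complex.exp (-s * ((Real.log |l| : ℝ) : ℂ))‖ = |l| ^ (-s.re) := by
      rw [aux_norm_exp_real, Real.rpow_def_of_pos hx0]
      congr 1
      ring
    have h3 : ‖Complex.exp (-s * M l) - 1‖ ≤ ‖s‖ * (c0 / |l|) * Real.exp (‖s‖ * (c0 / C)) := by
      refine (aux_factor s (M l) hmB).trans ?_
      gcongr
    calc ‖G s l‖
        = ‖Complex.exp (-s * (Real.log |l| : ℂ))‖ * ‖g l‖ * ‖Complex.exp (-s * M l) - 1‖ := by
          simp only [hGdef]; rw [norm_mul, norm_mul]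
      _ ≤ |l| ^ (-s.re) * (K / |l|) * (‖s‖ * (c0 / |l|) * Real.exp (‖s‖ * (c0 / C))) := by
          rw [h1]
          gcongr
      _ = K * c0 * ‖s‖ * Real.exp (‖s‖ * (c0 / C)) * (|l| ^ (-s.re) * |l|⁻¹ * |l|⁻¹) := by
          simp only [div_eq_mul_inv]; ring
      _ = K * c0 * ‖s‖ * Real.exp (‖s‖ * (c0 / C)) * |l| ^ (-s.re - 2) := by
          rw [aux_rpow_split hx0]
  -- integrability of G s
  have part1G : ∀ s : ℂ, -1 < s.re → IntegrableOn (G s) (Set.Iic (-C)) := by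
    intro s hs
    have hpint := (aux_integrable hC (show -s.re - 2 < -1 by linarith)).const_mul
      (K * c0 * ‖s‖ * Real.exp (‖s‖ * (c0 / C)))
    refine Integrable.mono' hpint ((hmG s).aestronglyMeasurable.restrict) ?_
    refine (ae_restrict_iff' measurableSet_Iic).2 ?_
    filter_upwards with l hl using hGbound s l hl
  refine ⟨?_, ?_, ?_⟩
  · intro s hs
    exact (integrableOn_congr_fun (hFG s) measurableSet_Iic).2 (part1G s hs)
  · -- holomorphy
    set G' : ℂ → ℝ → ℂ := fun s l =>
      (-(Real.log |l| : ℂ)) * Complex.exp (-s * (Real.log |l| : ℂ)) * g l *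
          (Complex.exp (-s * M l) - 1)
        + Complex.exp (-s * (Real.log |l| : ℂ)) * g l * (-(M l) * Complex.exp (-s * M l))
      with hG'def
    have hmG' : ∀ s : ℂ, Measurable (G' s) := by
      intro s
      have m0 : Measurable fun l : ℝ => (-(Real.log |l| : ℂ)) :=
        (Complex.measurable_ofReal.comp (Real.measurable_log.comp measurable_abs)).neg
      exact (((m0.mul (m1 s)).mul hg).mul ((m3 s).sub measurable_const)).add
        (((m1 s).mul hg).mul (m2.neg.mul (m3 s)))
    have hderiv : ∀ l : ℝ, ∀ s : ℂ, HasDerivAt (fun s => G s l) (G' s l) s := by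
      intro l s
      have h1 := (aux_hasDerivAt_expmul ((Real.log |l| : ℝ) : ℂ) s).mul_const (g l)
      have h2 := (aux_hasDerivAt_expmul (M l) s).sub_const 1
      have h := h1.mul h2
      simp only [hGdef, hG'def]
      exact h
    -- uniform pointwise bound for G'
    have hG'bound : ∀ s : ℂ, ∀ l : ℝ, l ≤ -C →
        ‖G' s l‖ ≤ K * c0 * Real.exp (‖s‖ * (c0 / C)) * (‖s‖ * |Real.log (|l|)| + 1) *
          (|l| ^ (-s.re) * |l|⁻¹ * |l|⁻¹) := by
      intro s l hl
      obtain ⟨hx0, hxC, hM, hz⟩ := hfacts l hl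
      have hgl : ‖g l‖ ≤ K / |l| := by exact hbound l hl
      have hMC : ‖M l‖ ≤ c0 / C := hM.trans (by gcongr)
      have hmB : ‖s‖ * ‖M l‖ ≤ ‖s‖ * (c0 / C) := by gcongr
      have h1 : ‖Complex.exp (-s * ((Real.log |l| : ℝ) : ℂ))‖ = |l| ^ (-s.re) := by
        rw [aux_norm_exp_real, Real.rpow_def_of_pos hx0]
        congr 1
        ring
      have h3 : ‖Complex.exp (-s * M l) - 1‖ ≤ ‖s‖ * (c0 / |l|) * Real.exp (‖s‖ * (c0 / C)) := by
        refine (aux_factor s (M l) hmB).trans ?_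
        gcongr
      have h4 : ‖Complex.exp (-s * M l)‖ ≤ Real.exp (‖s‖ * (c0 / C)) := by
        refine (aux_norm_exp_le _).trans ?_
        apply Real.exp_le_exp.2
        rw [norm_mul, norm_neg]
        exact hmB
      have hnL : ‖(-(Real.log |l| : ℂ))‖ = |Real.log (|l|)| := by
        rw [norm_neg, Complex.norm_real, Real.norm_eq_abs]
      have hrpos : (0:ℝ) ≤ |l| ^ (-s.re) := (Real.rpow_pos_of_pos hx0 _).le
      calc ‖G' s l‖
          ≤ ‖(-(Real.log |l| : ℂ)) * Complex.exp (-s * (Real.log |l| : ℂ)) * g l *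
              (Complex.exp (-s * M l) - 1)‖
            + ‖Complex.exp (-s * (Real.log |l| : ℂ)) * g l *
              (-(M l) * Complex.exp (-s * M l))‖ := by
            simp only [hG'def]; exact norm_add_le _ _
        _ ≤ |Real.log (|l|)| * (|l| ^ (-s.re)) * (K / |l|) *
              (‖s‖ * (c0 / |l|) * Real.exp (‖s‖ * (c0 / C)))
            + (|l| ^ (-s.re)) * (K / |l|) * ((c0 / |l|) * Real.exp (‖s‖ * (c0 / C))) := by
            apply add_le_add
            · rw [norm_mul, norm_mul, norm_mul, hnL, h1]
              gcongr
            · rw [norm_mul, norm_mul, norm_mul, norm_neg, h1]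
              gcongr
        _ = K * c0 * Real.exp (‖s‖ * (c0 / C)) * (‖s‖ * |Real.log (|l|)| + 1) *
              (|l| ^ (-s.re) * |l|⁻¹ * |l|⁻¹) := by
            simp only [div_eq_mul_inv]; ring
    -- differentiability at each point of the half plane
    have key : ∀ s₀ ∈ {s : ℂ | (-1:ℝ) < s.re},
        DifferentiableAt ℂ (fun s : ℂ => ∫ l in Set.Iic (-C), G s l) s₀ := by
      intro s₀ hs₀
      simp only [Set.mem_setOf_eq] at hs₀
      set ε : ℝ := (1 + s₀.re) / 2 with hεdef
      have hε : 0 < ε := by rw [hεdef]; linarith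
      set a : ℝ := -s₀.re + ε with hadef
      set S : ℝ := ‖s₀‖ + ε with hSdef
      set η : ℝ := ε / 2 with hηdef
      have hη : 0 < η := by rw [hηdef]; linarith
      have hn0 : (0:ℝ) ≤ ‖s₀‖ := norm_nonneg s₀
      have hS0 : 0 ≤ S := by rw [hSdef]; linarith
      have hre_norm : s₀.re ≤ ‖s₀‖ := by
        calc s₀.re ≤ |s₀.re| := le_abs_self _
        _ ≤ ‖s₀‖ := Complex.abs_re_le_norm s₀
        _ = ‖s₀‖ := rfl
      have e1 : a + η - 2 < -1 := by rw [hadef, hηdef, hεdef]; linarith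
      have e2 : -S + η - 2 < -1 := by rw [hSdef, hηdef]; linarith
      have e3 : a - η - 2 < -1 := by rw [hadef, hηdef, hεdef]; linarith
      have e4 : -S - η - 2 < -1 := by rw [hSdef, hηdef]; linarith
      have e5 : a - 2 < -1 := by rw [hadef, hεdef]; linarith
      have e6 : -S - 2 < -1 := by rw [hSdef]; linarith
      set E : ℝ := Real.exp (S * (c0 / C)) with hEdef
      have hE0 : 0 < E := Real.exp_pos _
      set D : ℝ := K * c0 * E with hDdef
      have hD0 : 0 ≤ D := by rw [hDdef]; positivity
      set bnd : ℝ → ℝ := fun l =>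
        D * (S / η) * (|l| ^ (a + η - 2) + |l| ^ (-S + η - 2) + |l| ^ (a - η - 2)
          + |l| ^ (-S - η - 2)) + D * (|l| ^ (a - 2) + |l| ^ (-S - 2)) with hbnddef
      have hbndint : Integrable bnd (volume.restrict (Set.Iic (-C))) := by
        refine Integrable.add ?_ ?_
        · exact ((((aux_integrable hC e1).add (aux_integrable hC e2)).add
            (aux_integrable hC e3)).add (aux_integrable hC e4)).const_mul _
        · exact ((aux_integrable hC e5).add (aux_integrable hC e6)).const_mul _
      have hball : ∀ l : ℝ, l ≤ -C → ∀ s ∈ Metric.ball s₀ ε, ‖G' s l‖ ≤ bnd l := by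
        intro l hl s hs
        obtain ⟨hx0, hxC, hMl, hzl⟩ := hfacts l hl
        have hds : ‖s - s₀‖ < ε := by rwa [Metric.mem_ball, dist_eq_norm] at hs
        have hsS : ‖s‖ ≤ S := by
          have h := norm_add_le s₀ (s - s₀)
          rw [add_sub_cancel] at h
          rw [hSdef]
          linarith
        have hre1 : |s.re - s₀.re| ≤ ‖s - s₀‖ := by
          calc |s.re - s₀.re| = |(s - s₀).re| := by rw [Complex.sub_re]
          _ ≤ ‖s - s₀‖ := Complex.abs_re_le_norm _
          _ = ‖s - s₀‖ := rfl
        have habs := abs_le.mp hre1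
        have hre2 : -s.re ≤ a := by rw [hadef]; linarith [habs.1]
        have hre3 : s.re ≤ S := by rw [hSdef]; linarith [habs.2]
        have hEs : Real.exp (‖s‖ * (c0 / C)) ≤ E := by
          rw [hEdef]
          apply Real.exp_le_exp.2
          gcongr
        have hrb : |l| ^ (-s.re) ≤ |l| ^ a + |l| ^ (-S) := aux_rpow_bound hx0 hre2 hre3
        have hLb : |Real.log (|l|)| ≤ (|l| ^ η + |l| ^ (-η)) / η := aux_abs_log_le hx0 hη
        have hfpos : (0:ℝ) ≤ |l|⁻¹ := by positivity
        have hstep : ‖G' s l‖ ≤ D * (S * ((|l| ^ η + |l| ^ (-η)) / η) + 1) *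
            ((|l| ^ a + |l| ^ (-S)) * |l|⁻¹ * |l|⁻¹) := by
          refine (hG'bound s l hl).trans ?_
          have hKc0 : (0:ℝ) ≤ K * c0 := mul_nonneg hK hc0
          have hT0 : (0:ℝ) ≤ |l| ^ (-s.re) * |l|⁻¹ * |l|⁻¹ :=
            mul_nonneg (mul_nonneg (Real.rpow_pos_of_pos hx0 _).le hfpos) hfpos
          have hN10 : (0:ℝ) ≤ ‖s‖ * |Real.log (|l|)| + 1 := by positivity
          have hN1 : ‖s‖ * |Real.log (|l|)| + 1 ≤ S * ((|l| ^ η + |l| ^ (-η)) / η) + 1 := by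
            have h := mul_le_mul hsS hLb (abs_nonneg _) hS0
            linarith
          have hT : |l| ^ (-s.re) * |l|⁻¹ * |l|⁻¹ ≤ (|l| ^ a + |l| ^ (-S)) * |l|⁻¹ * |l|⁻¹ :=
            mul_le_mul_of_nonneg_right (mul_le_mul_of_nonneg_right hrb hfpos) hfpos
          have hP1 : K * c0 * Real.exp (‖s‖ * (c0 / C)) ≤ K * c0 * E :=
            mul_le_mul_of_nonneg_left hEs hKc0
          have hP0 : (0:ℝ) ≤ K * c0 * E := mul_nonneg hKc0 hE0.le
          refine (mul_le_mul (mul_le_mul hP1 hN1 hN10 hP0) hT hT0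
            (mul_nonneg hP0 (hN10.trans hN1))).trans_eq ?_
          rw [hDdef]
        have heq : D * (S * ((|l| ^ η + |l| ^ (-η)) / η) + 1) *
            ((|l| ^ a + |l| ^ (-S)) * |l|⁻¹ * |l|⁻¹) = bnd l := by
          simp only [hbnddef]
          have r1 : |l| ^ (a + η - 2) = |l| ^ a * |l| ^ η * |l|⁻¹ * |l|⁻¹ := by
            rw [aux_rpow_split hx0, Real.rpow_add hx0]
          have r2 : |l| ^ (-S + η - 2) = |l| ^ (-S) * |l| ^ η * |l|⁻¹ * |l|⁻¹ := by
            rw [aux_rpow_split hx0, Real.rpow_add hx0]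
          have r3 : |l| ^ (a - η - 2) = |l| ^ a * |l| ^ (-η) * |l|⁻¹ * |l|⁻¹ := by
            rw [aux_rpow_split hx0, show a - η = a + (-η) from sub_eq_add_neg a η,
              Real.rpow_add hx0]
          have r4 : |l| ^ (-S - η - 2) = |l| ^ (-S) * |l| ^ (-η) * |l|⁻¹ * |l|⁻¹ := by
            rw [aux_rpow_split hx0, show -S - η = -S + (-η) from sub_eq_add_neg (-S) η,
              Real.rpow_add hx0]
          have r5 : |l| ^ (a - 2) = |l| ^ a * |l|⁻¹ * |l|⁻¹ := aux_rpow_split hx0 a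
          have r6 : |l| ^ (-S - 2) = |l| ^ (-S) * |l|⁻¹ * |l|⁻¹ := aux_rpow_split hx0 (-S)
          rw [r1, r2, r3, r4, r5, r6]
          simp only [div_eq_mul_inv]
          ring
        exact hstep.trans_eq heq
      have hkey := hasDerivAt_integral_of_dominated_loc_of_deriv_le
        (μ := volume.restrict (Set.Iic (-C))) (F' := G') (Metric.ball_mem_nhds s₀ hε)
        (Filter.Eventually.of_forall fun s => (hmG s).aestronglyMeasurable.restrict)
        (part1G s₀ hs₀)
        ((hmG' s₀).aestronglyMeasurable.restrict)
        ((ae_restrict_iff' measurableSet_Iic).2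
          (Filter.Eventually.of_forall fun l hl s hs => hball l hl s hs))
        hbndint
        (Filter.Eventually.of_forall fun l s _ => hderiv l s)
      exact hkey.2.differentiableAt
    have hfun : (fun s : ℂ => ∫ l in Set.Iic (-C),
        Complex.exp (-s * (Real.log |l| : ℂ)) * g l * ((1 - lam / (l : ℂ)) ^ (-s) - 1))
        = fun s : ℂ => ∫ l in Set.Iic (-C), G s l :=
      funext fun s => setIntegral_congr_fun measurableSet_Iic (hFG s)
    rw [hfun]
    exact fun s₀ hs₀ => (key s₀ hs₀).differentiableWithinAt
  · simp only [neg_zero, zero_mul, Complex.cpow_zero, sub_self, mul_zero, integral_zero]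
end

section
/- Let R > 0, let d ∈ ℤ, and let f be holomorphic and nowhere vanishing on the punctured disc {z ∈ ℂ : 0 < |z| < R}. Suppose that the function z ↦ f'(z)/f(z) − d/z, defined on the punctured disc, extends to a holomorphic function on the full disc {|z| < R}. Then there exists a holomorphic function g on {|z| < R} with g(0) ≠ 0 such that f(z) = z^d · g(z) for all 0 < |z| < R; in particular the limit lim_{z→0} z^{−d}·f(z) exists and is nonzero. -/
open Filter

section Aux
open Metric Set intervalIntegral MeasureTheory

/-- Constancy of a function with zero derivative on an open preconnected set. -/
theorem aux_const_of_deriv_zero {s : Set ℂ} (hs : IsOpen s) (hc : IsPreconnected s)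
    {p : ℂ → ℂ} (hp : ∀ x ∈ s, HasDerivAt p 0 x) {x y : ℂ} (hx : x ∈ s) (hy : y ∈ s) :
    p x = p y := by
  have hcont : ∀ a ∈ s, ContinuousAt p a := fun a ha => (hp a ha).differentiableAt.continuousAt
  -- local constancy
  have hloc : ∀ a ∈ s, ∀ᶠ b in nhds a, p b = p a := by
    intro a ha
    obtain ⟨ε, hε, hball⟩ := Metric.isOpen_iff.1 hs a ha
    filter_upwards [Metric.ball_mem_nhds a hε] with b hb
    have hdiff : DifferentiableOn ℂ p (ball a ε) := fun w hw =>
      (hp w (hball hw)).differentiableAt.differentiableWithinAt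
    refine (convex_ball a ε).is_const_of_fderivWithin_eq_zero hdiff (fun w hw => ?_) hb
      (Metric.mem_ball_self hε)
    rw [fderivWithin_of_isOpen Metric.isOpen_ball hw]
    have := (hp w (hball hw)).hasFDerivAt.fderiv
    rw [this]; ext; simp
  set u : Set ℂ := {a | a ∈ s ∧ p a = p y} with hu
  set v : Set ℂ := {a | a ∈ s ∧ p a ≠ p y} with hv
  have hou : IsOpen u := by
    rw [isOpen_iff_mem_nhds]
    rintro a ⟨has, hpa⟩
    filter_upwards [hloc a has, hs.mem_nhds has] with b hb hbs
    exact ⟨hbs, hb.trans hpa⟩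
  have hov : IsOpen v := by
    rw [isOpen_iff_mem_nhds]
    rintro a ⟨has, hpa⟩
    filter_upwards [(hcont a has).eventually_ne hpa, hs.mem_nhds has] with b hb hbs
    exact ⟨hbs, hb⟩
  have hdisj : Disjoint u v := by
    rw [Set.disjoint_iff]
    rintro a ⟨⟨_, h1⟩, ⟨_, h2⟩⟩
    exact absurd h1 h2
  have hsub : s ⊆ u ∪ v := fun a ha => by
    by_cases hpa : p a = p y
    · exact Or.inl ⟨ha, hpa⟩
    · exact Or.inr ⟨ha, hpa⟩
  rcases hc.subset_or_subset hou hov hdisj hsub with hsu | hsv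
  · exact (hsu hx).2
  · exact absurd (hsv hy).2 (by simp)


theorem aux_preconnected_punctured (R : ℝ) (hR : 0 < R) :
    IsPreconnected (Metric.ball (0 : ℂ) R \ {0}) := by
  have hrank : 1 < Module.rank ℝ ℂ := by
    rw [Complex.rank_real_complex]; norm_num
  have hpc : IsPathConnected ({(0 : ℂ)}ᶜ : Set ℂ) :=
    isPathConnected_compl_singleton_of_one_lt_rank hrank 0
  set φ : ℂ → ℂ := fun z => ((R / (1 + ‖z‖) : ℝ) : ℂ) * z with hφ
  have hcont : Continuous φ := by
    apply Continuous.mul _ continuous_id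
    apply Continuous.comp Complex.continuous_ofReal
    apply Continuous.div continuous_const (by continuity)
    intro z
    positivity
  have himg : φ '' ({(0 : ℂ)}ᶜ) = Metric.ball (0 : ℂ) R \ {0} := by
    ext w
    simp only [Set.mem_image, Set.mem_compl_iff, Set.mem_singleton_iff, Set.mem_diff,
      Metric.mem_ball, dist_zero_right]
    constructor
    · rintro ⟨z, hz, rfl⟩
      have hz' : 0 < ‖z‖ := norm_pos_iff.2 hz
      constructor
      · rw [norm_mul, Complex.norm_real]
        rw [Real.norm_of_nonneg (by positivity)]
        rw [div_mul_eq_mul_div, div_lt_iff₀ (by positivity)]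
        nlinarith
      · simp only [hφ, mul_eq_zero, not_or]
        refine ⟨?_, hz⟩
        simp only [Complex.ofReal_eq_zero]
        positivity
    · rintro ⟨hw1, hw2⟩
      have hw' : 0 < ‖w‖ := norm_pos_iff.2 hw2
      refine ⟨((R - ‖w‖)⁻¹ : ℝ) * w, ?_, ?_⟩
      · simp only [mul_eq_zero, not_or, Complex.ofReal_eq_zero]
        constructor
        · rw [inv_eq_zero]; intro hh; linarith
        · exact hw2
      · have hRw : 0 < R - ‖w‖ := by linarith
        have hn : ‖((R - ‖w‖)⁻¹ : ℝ) * w‖ = ‖w‖ / (R - ‖w‖) := by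
          rw [norm_mul, Complex.norm_real, Real.norm_of_nonneg (by positivity)]
          rw [inv_mul_eq_div]
        simp only [hφ, hn]
        have hRw0 : R - ‖w‖ ≠ 0 := ne_of_gt hRw
        have h1 : 1 + ‖w‖ / (R - ‖w‖) = R / (R - ‖w‖) := by
          rw [eq_div_iff hRw0, add_mul, div_mul_cancel₀ _ hRw0, one_mul]
          ring
        have : R / (1 + ‖w‖ / (R - ‖w‖)) * (R - ‖w‖)⁻¹ = 1 := by
          rw [h1, div_div_eq_mul_div, div_mul_eq_mul_div, mul_assoc,
            mul_inv_cancel₀ hRw0, mul_one, div_self hR.ne']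
        rw [← mul_assoc, ← Complex.ofReal_mul, this, Complex.ofReal_one, one_mul]
  rw [← himg]
  exact (hpc.image hcont).isConnected.isPreconnected


theorem aux_primitive (R : ℝ) (h : ℂ → ℂ)
    (hd : DifferentiableOn ℂ h (Metric.ball (0 : ℂ) R)) :
    ∀ z ∈ Metric.ball (0 : ℂ) R,
      HasDerivAt (fun z : ℂ => ∫ t in (0:ℝ)..1, z * h ((t : ℂ) * z)) (h z) z := by
  have han : AnalyticOnNhd ℂ h (Metric.ball (0 : ℂ) R) :=
    hd.analyticOnNhd Metric.isOpen_ball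
  have hd' : DifferentiableOn ℂ (deriv h) (Metric.ball (0 : ℂ) R) :=
    han.deriv.differentiableOn
  have hch : ContinuousOn h (Metric.ball (0 : ℂ) R) := hd.continuousOn
  have hcd : ContinuousOn (deriv h) (Metric.ball (0 : ℂ) R) := hd'.continuousOn
  intro z0 hz0
  rw [mem_ball_zero_iff] at hz0
  set r : ℝ := (‖z0‖ + R) / 2 with hr_def
  have hr1 : ‖z0‖ < r := by rw [hr_def]; linarith
  have hr2 : r < R := by rw [hr_def]; linarith
  have hr0 : 0 < r := lt_of_le_of_lt (norm_nonneg _) hr1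
  set ε : ℝ := r - ‖z0‖ with hε_def
  have hε : 0 < ε := by rw [hε_def]; linarith
  have hsub : Metric.closedBall (0 : ℂ) r ⊆ Metric.ball (0 : ℂ) R :=
    Metric.closedBall_subset_ball hr2
  have hx_norm : ∀ x ∈ Metric.ball z0 ε, ‖x‖ < r := by
    intro x hx
    rw [Metric.mem_ball, dist_eq_norm] at hx
    calc ‖x‖ = ‖x - z0 + z0‖ := by ring_nf
    _ ≤ ‖x - z0‖ + ‖z0‖ := norm_add_le _ _
    _ < ε + ‖z0‖ := by linarith
    _ = r := by rw [hε_def]; ring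
  have hmem : ∀ x : ℂ, ‖x‖ ≤ r → ∀ t : ℝ, |t| ≤ 1 →
      (t : ℂ) * x ∈ Metric.closedBall (0 : ℂ) r := by
    intro x hx t ht
    rw [Metric.mem_closedBall, dist_zero_right, norm_mul, Complex.norm_real,
      Real.norm_eq_abs]
    calc |t| * ‖x‖ ≤ 1 * ‖x‖ := by
          apply mul_le_mul_of_nonneg_right ht (norm_nonneg _)
    _ ≤ r := by rw [one_mul]; exact hx
  -- bounds
  obtain ⟨C1, hC1⟩ := (isCompact_closedBall (0 : ℂ) r).exists_bound_of_continuousOn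
    (hch.mono hsub)
  obtain ⟨C2, hC2⟩ := (isCompact_closedBall (0 : ℂ) r).exists_bound_of_continuousOn
    (hcd.mono hsub)
  have h0mem : (0 : ℂ) ∈ Metric.closedBall (0 : ℂ) r := by
    simp [Metric.mem_closedBall, hr0.le]
  have hC1nn : 0 ≤ C1 := le_trans (norm_nonneg _) (hC1 0 h0mem)
  have hC2nn : 0 ≤ C2 := le_trans (norm_nonneg _) (hC2 0 h0mem)
  set F' : ℂ → ℝ → ℂ := fun x t => h ((t : ℂ) * x) + x * (deriv h ((t : ℂ) * x) * (t : ℂ))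
    with hF'_def
  -- continuity in t of the integrands
  have hcont_t : ∀ x : ℂ, ‖x‖ < r → ContinuousOn (fun t : ℝ => x * h ((t : ℂ) * x))
      (Set.uIcc (0:ℝ) 1) := by
    intro x hx
    apply ContinuousOn.mul continuousOn_const
    apply hch.comp
    · exact (Complex.continuous_ofReal.mul continuous_const).continuousOn
    · intro t ht
      rw [Set.uIcc_of_le (by norm_num : (0:ℝ) ≤ 1), Set.mem_Icc] at ht
      exact hsub (hmem x hx.le t (abs_le.2 ⟨by linarith [ht.1], ht.2⟩))
  have hcont_t' : ∀ x : ℂ, ‖x‖ < r → ContinuousOn (F' x) (Set.uIcc (0:ℝ) 1) := by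
    intro x hx
    have hmaps : ∀ t ∈ Set.uIcc (0:ℝ) 1, (t : ℂ) * x ∈ Metric.ball (0 : ℂ) R := by
      intro t ht
      rw [Set.uIcc_of_le (by norm_num : (0:ℝ) ≤ 1), Set.mem_Icc] at ht
      exact hsub (hmem x hx.le t (abs_le.2 ⟨by linarith [ht.1], ht.2⟩))
    have hc1 : ContinuousOn (fun t : ℝ => (t : ℂ) * x) (Set.uIcc (0:ℝ) 1) :=
      (Complex.continuous_ofReal.mul continuous_const).continuousOn
    exact (hch.comp hc1 hmaps).add (continuousOn_const.mul
      ((hcd.comp hc1 hmaps).mul Complex.continuous_ofReal.continuousOn))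
  have key := intervalIntegral.hasDerivAt_integral_of_dominated_loc_of_deriv_le
    (F := fun x t => x * h ((t : ℂ) * x)) (F' := F') (x₀ := z0)
    (a := (0:ℝ)) (b := 1) (μ := volume) (bound := fun _ => C1 + r * C2) (Metric.ball_mem_nhds z0 hε)
    ?_ ?_ ?_ ?_ ?_ ?_
  · -- conclude
    obtain ⟨hint, hder⟩ := key
    have hval : (∫ t in (0:ℝ)..1, F' z0 t) = h z0 := by
      have hFTC := intervalIntegral.integral_eq_sub_of_hasDerivAt
        (f := fun t : ℝ => (t : ℂ) * h ((t : ℂ) * z0)) (f' := F' z0)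
        (a := (0:ℝ)) (b := 1) ?_ hint
      · rw [hFTC]; simp
      · intro t ht
        rw [Set.uIcc_of_le (by norm_num : (0:ℝ) ≤ 1), Set.mem_Icc] at ht
        have htz : (t : ℂ) * z0 ∈ Metric.ball (0 : ℂ) R := by
          apply hsub
          apply hmem z0 hr1.le t (abs_le.2 ⟨by linarith [ht.1], ht.2⟩)
        have hd_at : HasDerivAt h (deriv h ((t : ℂ) * z0)) ((t : ℂ) * z0) :=
          (hd.differentiableAt (Metric.isOpen_ball.mem_nhds htz)).hasDerivAt
        have hlin : HasDerivAt (fun w : ℂ => w * z0) z0 (t : ℂ) := by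
          simpa using (hasDerivAt_id (t : ℂ)).mul_const z0
        have hcomp : HasDerivAt (fun w : ℂ => h (w * z0))
            (deriv h ((t : ℂ) * z0) * z0) (t : ℂ) := hd_at.comp (t : ℂ) hlin
        have hψ : HasDerivAt (fun w : ℂ => w * h (w * z0))
            (1 * h ((t : ℂ) * z0) + (t : ℂ) * (deriv h ((t : ℂ) * z0) * z0)) (t : ℂ) :=
          (hasDerivAt_id (t : ℂ)).mul hcomp
        have := hψ.comp_ofReal
        refine this.congr_deriv ?_
        rw [hF'_def]
        ring
    rw [hval] at hder
    exact hder
  · -- hF_meas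
    filter_upwards [Metric.ball_mem_nhds z0 hε] with x hx
    exact ((hcont_t x (hx_norm x hx)).mono
      (Set.uIoc_subset_uIcc)).aestronglyMeasurable measurableSet_uIoc
  · -- hF_int
    exact (hcont_t z0 hr1).intervalIntegrable
  · -- hF'_meas
    exact ((hcont_t' z0 hr1).mono Set.uIoc_subset_uIcc).aestronglyMeasurable measurableSet_uIoc
  · -- h_bound
    apply Filter.Eventually.of_forall
    intro t ht x hx
    rw [Set.uIoc_of_le (by norm_num : (0:ℝ) ≤ 1), Set.mem_Ioc] at ht
    have htabs : |t| ≤ 1 := abs_le.2 ⟨by linarith [ht.1], ht.2⟩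
    have hxr : ‖x‖ < r := hx_norm x hx
    have htx : (t : ℂ) * x ∈ Metric.closedBall (0 : ℂ) r := hmem x hxr.le t htabs
    calc ‖F' x t‖ ≤ ‖h ((t : ℂ) * x)‖ + ‖x * (deriv h ((t : ℂ) * x) * (t : ℂ))‖ :=
          norm_add_le _ _
    _ ≤ C1 + r * C2 := by
        apply add_le_add (hC1 _ htx)
        rw [norm_mul, norm_mul, Complex.norm_real, Real.norm_eq_abs]
        calc ‖x‖ * (‖deriv h ((t : ℂ) * x)‖ * |t|) ≤ r * (C2 * 1) := by
              apply mul_le_mul hxr.le _ (by positivity) hr0.le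
              exact mul_le_mul (hC2 _ htx) htabs (abs_nonneg _) hC2nn
        _ = r * C2 := by ring
  · exact intervalIntegrable_const
  · -- h_diff
    apply Filter.Eventually.of_forall
    intro t ht x hx
    rw [Set.uIoc_of_le (by norm_num : (0:ℝ) ≤ 1), Set.mem_Ioc] at ht
    have htabs : |t| ≤ 1 := abs_le.2 ⟨by linarith [ht.1], ht.2⟩
    have hxr : ‖x‖ < r := hx_norm x hx
    have htx : (t : ℂ) * x ∈ Metric.ball (0 : ℂ) R := hsub (hmem x hxr.le t htabs)
    have hd_at : HasDerivAt h (deriv h ((t : ℂ) * x)) ((t : ℂ) * x) :=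
      (hd.differentiableAt (Metric.isOpen_ball.mem_nhds htx)).hasDerivAt
    have hlin : HasDerivAt (fun y : ℂ => (t : ℂ) * y) (t : ℂ) x := by
      simpa using (hasDerivAt_id x).const_mul (t : ℂ)
    have hcomp : HasDerivAt (fun y : ℂ => h ((t : ℂ) * y))
        (deriv h ((t : ℂ) * x) * (t : ℂ)) x := hd_at.comp _ hlin
    have := (hasDerivAt_id x).mul hcomp
    refine this.congr_deriv ?_
    simp [hF'_def]

end Aux

/-- If `f` is holomorphic and nowhere vanishing on the punctured disc `0 < |z| < R` and
`f'/f − d/z` extends holomorphically to the full disc, then `f(z) = z^d g(z)` for some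
holomorphic `g` on the disc with `g(0) ≠ 0`; in particular `z^{−d} f(z)` has a nonzero
limit as `z → 0`. -/
theorem exists_factorization_zpow
    (R : ℝ) (hR : 0 < R) (d : ℤ) (f : ℂ → ℂ)
    (hf : DifferentiableOn ℂ f (Metric.ball (0 : ℂ) R \ {0}))
    (hf0 : ∀ z ∈ Metric.ball (0 : ℂ) R \ {0}, f z ≠ 0)
    (hext : ∃ h : ℂ → ℂ, DifferentiableOn ℂ h (Metric.ball (0 : ℂ) R) ∧
      ∀ z ∈ Metric.ball (0 : ℂ) R \ {0}, h z = deriv f z / f z - (d : ℂ) / z) :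
    ∃ g : ℂ → ℂ, DifferentiableOn ℂ g (Metric.ball (0 : ℂ) R) ∧ g 0 ≠ 0 ∧
      (∀ z ∈ Metric.ball (0 : ℂ) R \ {0}, f z = z ^ d * g z) ∧
      Tendsto (fun z : ℂ => z ^ (-d) * f z) (nhdsWithin 0 {(0 : ℂ)}ᶜ) (nhds (g 0)) := by
  obtain ⟨h, hd, heq⟩ := hext
  set B : Set ℂ := Metric.ball (0 : ℂ) R with hB
  set S : Set ℂ := B \ {0} with hS
  have hSopen : IsOpen S := Metric.isOpen_ball.sdiff isClosed_singleton
  set H : ℂ → ℂ := fun z => ∫ t in (0:ℝ)..1, z * h ((t : ℂ) * z) with hH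
  have hHderiv : ∀ z ∈ B, HasDerivAt H (h z) z := aux_primitive R h hd
  have hHdiff : DifferentiableOn ℂ H B := fun z hz =>
    ((hHderiv z hz).differentiableAt).differentiableWithinAt
  set p : ℂ → ℂ := fun z => f z * Complex.exp (-H z) * z ^ (-d) with hp_def
  have hp : ∀ z ∈ S, HasDerivAt p 0 z := by
    rintro z hz
    obtain ⟨hzB, hz0'⟩ := hz
    have hz0 : z ≠ 0 := by simpa using hz0'
    have hfz : f z ≠ 0 := hf0 z ⟨hzB, hz0'⟩
    have hfd : HasDerivAt f (deriv f z) z :=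
      (hf.differentiableAt (hSopen.mem_nhds ⟨hzB, hz0'⟩)).hasDerivAt
    have hHd : HasDerivAt H (h z) z := hHderiv z hzB
    have hE : HasDerivAt (fun w => Complex.exp (-H w)) (Complex.exp (-H z) * (-h z)) z :=
      hHd.neg.cexp
    have hZ := hasDerivAt_zpow (-d) z (Or.inl hz0)
    have hter := (hfd.mul hE).mul hZ
    have hfderiv : deriv f z = (h z + (d : ℂ) / z) * f z := by
      rw [heq z ⟨hzB, hz0'⟩]
      field_simp
      ring
    have hzp : z ^ (-d) = z ^ (-d - 1) * z := by
      rw [← zpow_add_one₀ hz0]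
      congr 1
      ring
    refine hter.congr_deriv ?_
    rw [hfderiv, hzp]
    simp only [Pi.mul_apply, Int.cast_neg]
    field_simp
    ring
  have hSpre : IsPreconnected S := aux_preconnected_punctured R hR
  set z1 : ℂ := ((R / 2 : ℝ) : ℂ) with hz1_def
  have hz10 : z1 ≠ 0 := by
    simp only [hz1_def, ne_eq, Complex.ofReal_eq_zero]
    positivity
  have hz1S : z1 ∈ S := by
    constructor
    · rw [hB, mem_ball_zero_iff, hz1_def, Complex.norm_real, Real.norm_of_nonneg (by positivity)]
      linarith
    · simpa using hz10
  set c : ℂ := p z1 with hc_def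
  have hc0 : c ≠ 0 := by
    rw [hc_def, hp_def]
    exact mul_ne_zero (mul_ne_zero (hf0 z1 hz1S) (Complex.exp_ne_zero _)) (zpow_ne_zero _ hz10)
  have hconst : ∀ z ∈ S, p z = c := fun z hz =>
    aux_const_of_deriv_zero hSopen hSpre hp hz hz1S
  refine ⟨fun z => c * Complex.exp (H z), ?_, ?_, ?_, ?_⟩
  · exact (differentiableOn_const c).mul hHdiff.cexp
  · exact mul_ne_zero hc0 (Complex.exp_ne_zero _)
  · intro z hz
    have hz0 : z ≠ 0 := by
      rcases hz with ⟨_, hz0'⟩; simpa using hz0'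
    have hpz : f z * Complex.exp (-H z) * z ^ (-d) = c := hconst z hz
    rw [Complex.exp_neg, zpow_neg] at hpz
    field_simp at hpz
    rw [hpz]
    ring
  · have h0B : (0 : ℂ) ∈ B := Metric.mem_ball_self hR
    have hgc : ContinuousAt (fun z => c * Complex.exp (H z)) 0 := by
      apply ContinuousAt.mul continuousAt_const
      exact Complex.continuous_exp.continuousAt.comp
        (hHderiv 0 h0B).differentiableAt.continuousAt
    have htend : Tendsto (fun z => c * Complex.exp (H z)) (nhdsWithin 0 {(0 : ℂ)}ᶜ)
        (nhds (c * Complex.exp (H 0))) := hgc.tendsto.mono_left nhdsWithin_le_nhds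
    apply htend.congr'
    have hBmem : B ∈ nhdsWithin (0 : ℂ) {(0 : ℂ)}ᶜ :=
      nhdsWithin_le_nhds (Metric.isOpen_ball.mem_nhds h0B)
    filter_upwards [hBmem, self_mem_nhdsWithin] with z hzB hz0'
    have hz0 : z ≠ 0 := hz0'
    have hpz : f z * Complex.exp (-H z) * z ^ (-d) = c := hconst z ⟨hzB, hz0⟩
    rw [Complex.exp_neg, zpow_neg] at hpz
    rw [zpow_neg, ← hpz]
    field_simp
end
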